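/- arXiv:2402.00862 — 3 statements merged into one kernel-verified Lean document; each statement's English description precedes it below -/
import Mathlib

section
/- Let K be a field, G a finite group, and V a nonzero finite-dimensional K-vector space equipped with a faithful linear representation ρ of G. Then for every natural number d there exist a finite-dimensional K-vector space W and a faithful linear representation σ of G on W such that for every element g ≠ 1 of G and every scalar μ ∈ K, the eigenspace of σ(g) for μ has K-dimension at most dim_K W − d. -/
open Module LinearMap TensorProduct

noncomputable section Aux

variable {K : Type} [Field K] {G : Type} [Group G]

/-- Eigenspace of a product map is the product of eigenspaces. -/
lemma eigenspace_prodMap' {A B : Type} [AddCommGroup A] [Module K A]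
    [AddCommGroup B] [Module K B] (f : Module.End K A) (g : Module.End K B) (μ : K) :
    Module.End.eigenspace (f.prodMap g) μ =
      (Module.End.eigenspace f μ).prod (Module.End.eigenspace g μ) := by
  have h : (f.prodMap g) - μ • 1 = (f - μ • 1).prodMap (g - μ • 1) := by
    ext x <;> rfl
  rw [Module.End.eigenspace_def, h, LinearMap.ker_prodMap,
    Module.End.eigenspace_def, Module.End.eigenspace_def]

/-- The product of submodules is linearly equivalent to the product. -/
def Submodule.prodEquivAux {A B : Type} [AddCommGroup A] [Module K A]
    [AddCommGroup B] [Module K B] (p : Submodule K A) (q : Submodule K B) :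
    (p.prod q) ≃ₗ[K] p × q where
  toFun x := (⟨x.1.1, x.2.1⟩, ⟨x.1.2, x.2.2⟩)
  invFun y := ⟨(y.1.1, y.2.1), ⟨y.1.2, y.2.2⟩⟩
  map_add' _ _ := rfl
  map_smul' _ _ := rfl
  left_inv _ := rfl
  right_inv _ := rfl

lemma finrank_prod_submodule {A B : Type} [AddCommGroup A] [Module K A]
    [AddCommGroup B] [Module K B] [FiniteDimensional K A] [FiniteDimensional K B]
    (p : Submodule K A) (q : Submodule K B) :
    finrank K (p.prod q) = finrank K p + finrank K q := by
  rw [(Submodule.prodEquivAux p q).finrank_eq, Module.finrank_prod]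

/-- Product of two representations. -/
def Representation.prodRep {A B : Type} [AddCommGroup A] [Module K A]
    [AddCommGroup B] [Module K B] (ρ₁ : Representation K G A) (ρ₂ : Representation K G B) :
    Representation K G (A × B) where
  toFun g := (ρ₁ g).prodMap (ρ₂ g)
  map_one' := by simp [LinearMap.prodMap_one]
  map_mul' g h := by simp [map_mul, ← LinearMap.prodMap_mul]

@[simp] lemma Representation.prodRep_apply {A B : Type} [AddCommGroup A] [Module K A]
    [AddCommGroup B] [Module K B] (ρ₁ : Representation K G A) (ρ₂ : Representation K G B)
    (g : G) : (ρ₁.prodRep ρ₂) g = (ρ₁ g).prodMap (ρ₂ g) := rfl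

end Aux

/-- **Polynomial tensorial constructions with small eigenspaces**
(linear-algebra form of Proposition 3.8).

Let `K` be a field, `G` a finite group, and `V` a nonzero finite-dimensional
`K`-vector space with a faithful representation `ρ` of `G`.  Then for every
`d : ℕ` there is a finite-dimensional `K`-vector space `W` with a faithful
representation `σ` of `G` such that for every `g ≠ 1` and every scalar `μ`,
the eigenspace of `σ g` for `μ` has codimension at least `d` in `W`. -/
theorem exists_faithful_rep_with_small_eigenspaces
    (K : Type) [Field K] (G : Type) [Group G] [Finite G]
    (V : Type) [AddCommGroup V] [Module K V] [FiniteDimensional K V] [Nontrivial V]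
    (ρ : Representation K G V) (hρ : Function.Injective ρ) (d : ℕ) :
    ∃ (W : Type) (_ : AddCommGroup W) (_ : Module K W),
      FiniteDimensional K W ∧
      ∃ σ : Representation K G W, Function.Injective σ ∧
        ∀ g : G, g ≠ 1 → ∀ μ : K,
          Module.finrank K (Module.End.eigenspace (σ g) μ) + d ≤ Module.finrank K W := by
  -- key step lemma: on V × (V ⊗ V) every eigenspace of a nontrivial element has codim ≥ 1
  have key : ∀ g : G, g ≠ 1 → ∀ μ : K,
      Module.finrank K (Module.End.eigenspace ((ρ.prodRep (ρ.tprod ρ)) g) μ) + 1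
        ≤ Module.finrank K (V × (V ⊗[K] V)) := by
    intro g hg μ
    rw [Representation.prodRep_apply, eigenspace_prodMap', finrank_prod_submodule,
      Module.finrank_prod]
    by_cases h : ρ g = μ • 1
    · -- scalar case: μ ≠ 0, μ ≠ 1, so the tensor eigenspace is ⊥
      have hunit : IsUnit (ρ g) := (Group.isUnit g).map ρ
      have hμ0 : μ ≠ 0 := by
        rintro rfl
        rw [zero_smul] at h
        rw [h] at hunit
        exact one_ne_zero ((isUnit_zero_iff.mp hunit).symm)
      have hμ1 : μ ≠ 1 := by
        rintro rfl
        rw [one_smul] at h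
        exact hg (hρ (by rw [h, map_one]))
      have htensor : (ρ.tprod ρ) g = (μ * μ) • 1 := by
        rw [Representation.tprod_apply, h]
        ext x y
        simp [mul_smul, TensorProduct.smul_tmul']
      have hbot : Module.End.eigenspace ((ρ.tprod ρ) g) μ = ⊥ := by
        rw [eq_bot_iff]
        intro x hx
        rw [Module.End.mem_eigenspace_iff, htensor] at hx
        simp only [LinearMap.smul_apply, Module.End.one_apply] at hx
        have : (μ * μ - μ) • x = 0 := by rw [sub_smul, hx, sub_self]
        rcases smul_eq_zero.mp this with h' | h'
        · rcases mul_eq_zero.mp (show μ * (μ - 1) = 0 by linear_combination h') with h'' | h''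
          · exact absurd h'' hμ0
          · exact absurd (sub_eq_zero.mp h'') hμ1
        · simp [h']
      rw [hbot, finrank_bot]
      have h1 : Module.finrank K (Module.End.eigenspace (ρ g) μ) ≤ finrank K V :=
        Submodule.finrank_le _
      have hv : 0 < finrank K V := finrank_pos
      have h2 : 1 ≤ finrank K (V ⊗[K] V) := by
        rw [finrank_tensorProduct]
        exact Nat.one_le_iff_ne_zero.mpr (Nat.mul_ne_zero (by omega) (by omega))
      omega
    · -- non-scalar case: the V eigenspace is proper
      have hne : Module.End.eigenspace (ρ g) μ ≠ ⊤ := by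
        intro htop
        apply h
        ext x
        have : x ∈ Module.End.eigenspace (ρ g) μ := htop ▸ Submodule.mem_top
        simpa [Module.End.mem_eigenspace_iff] using this
      have h1 : Module.finrank K (Module.End.eigenspace (ρ g) μ) < finrank K V :=
        Submodule.finrank_lt hne
      have h2 : Module.finrank K (Module.End.eigenspace ((ρ.tprod ρ) g) μ)
          ≤ finrank K (V ⊗[K] V) := Submodule.finrank_le _
      omega
  induction d with
  | zero =>
    exact ⟨V, inferInstance, inferInstance, inferInstance, ρ, hρ,
      fun g _ μ => by simpa using Submodule.finrank_le _⟩
  | succ d ih =>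
    obtain ⟨W, _, _, _, σ, hσ, hbound⟩ := ih
    refine ⟨(V × (V ⊗[K] V)) × W, inferInstance, inferInstance, inferInstance,
      (ρ.prodRep (ρ.tprod ρ)).prodRep σ, ?_, ?_⟩
    · intro g h hgh
      apply hσ
      ext w
      have := congrArg (fun f => f ((0, 0), w)) hgh
      simpa using congrArg Prod.snd this
    · intro g hg μ
      rw [Representation.prodRep_apply, eigenspace_prodMap', finrank_prod_submodule,
        Module.finrank_prod]
      have h1 := key g hg μ
      have h2 := hbound g hg μ
      omega
end

section
/- Let K be a field, G a finite group, and V a nonzero finite-dimensional K-vector space equipped with a faithful linear representation ρ of G. Then there exist a finite-dimensional K-vector space W and a faithful linear representation σ of G on W such that no nontrivial element of G acts on W by a scalar, i.e. for every g ≠ 1 in G and every c ∈ K one has σ(g) ≠ c·id_W. -/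
/-- **First reduction step in Proposition 3.8.**

Let `K` be a field, `G` a finite group, and `V` a nonzero finite-dimensional
`K`-vector space with a faithful representation `ρ` of `G`.  Then there is a
finite-dimensional `K`-vector space `W` with a faithful representation `σ` of
`G` such that no nontrivial element of `G` acts on `W` by a scalar. -/
theorem exists_faithful_rep_no_scalar_action
    (K : Type) [Field K] (G : Type) [Group G] [Finite G]
    (V : Type) [AddCommGroup V] [Module K V] [FiniteDimensional K V] [Nontrivial V]
    (ρ : Representation K G V) (hρ : Function.Injective ρ) :
    ∃ (W : Type) (_ : AddCommGroup W) (_ : Module K W),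
      FiniteDimensional K W ∧
      ∃ σ : Representation K G W, Function.Injective σ ∧
        ∀ g : G, g ≠ 1 → ∀ c : K, σ g ≠ c • (LinearMap.id : W →ₗ[K] W) := by
  refine ⟨V × K, inferInstance, inferInstance, inferInstance, ?_⟩
  refine ⟨{ toFun := fun g => (ρ g).prodMap LinearMap.id,
            map_one' := by ext x <;> simp,
            map_mul' := fun g h => by ext x <;> simp }, ?_, ?_⟩
  · intro g₁ g₂ h
    apply hρ
    ext v
    have h2 := congrArg (fun f => (f : V × K →ₗ[K] V × K) (v, 0)) h
    simpa using congrArg Prod.fst h2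
  · intro g hg c hc
    have h1 := congrArg (fun f => (f : V × K →ₗ[K] V × K) (0, 1)) hc
    have hc1 : c = 1 := by simpa using (congrArg Prod.snd h1).symm
    apply hg
    apply hρ
    ext v
    have h2 := congrArg (fun f => (f : V × K →ₗ[K] V × K) (v, 0)) hc
    have h3 := congrArg Prod.fst h2
    simp [hc1] at h3
    simpa using h3
end

section
/- Let F ⊆ L ⊆ M be a tower of fields with M finite-dimensional over F. Assume that the degree [L : F] is a prime number, that M is a Galois extension of L, and that M is not a Galois extension of F. Then every F-algebra automorphism of M fixes L pointwise; equivalently, the fixed field of the group Aut_F(M) of all F-algebra automorphisms of M equals L, and Aut_F(M) coincides with Gal(M/L). -/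
/-- **Galois-theoretic core of Lemma 4.43.**

Let `F ⊆ L ⊆ M` be a tower of fields with `M` finite over `F`, `[L : F]`
prime, `M/L` Galois and `M/F` not Galois.  Then every `F`-algebra
automorphism of `M` fixes `L` pointwise; equivalently, the fixed field of
`Aut_F(M)` is `L` (so that `Aut_F(M) = Gal(M/L)`). -/
theorem autFixesMiddle_of_primeDegree_of_galois_top
    (F L M : Type) [Field F] [Field L] [Field M]
    [Algebra F L] [Algebra L M] [Algebra F M] [IsScalarTower F L M]
    [FiniteDimensional F M]
    (hprime : Nat.Prime (Module.finrank F L))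
    [IsGalois L M] (hnotGalois : ¬ IsGalois F M) :
    (∀ (σ : M ≃ₐ[F] M) (x : L), σ (algebraMap L M x) = algebraMap L M x) ∧
    IntermediateField.fixedField (⊤ : Subgroup (M ≃ₐ[F] M)) =
      (IsScalarTower.toAlgHom F L M).fieldRange := by
  haveI : FiniteDimensional L M := FiniteDimensional.right F L M
  set L' : IntermediateField F M := (IsScalarTower.toAlgHom F L M).fieldRange with hL'
  set K : IntermediateField F M :=
    IntermediateField.fixedField (⊤ : Subgroup (M ≃ₐ[F] M)) with hK
  -- M/L is Galois, so its fixed field over L is ⊥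
  have hLfix : IntermediateField.fixedField (⊤ : Subgroup (M ≃ₐ[L] M)) =
      (⊥ : IntermediateField L M) := ((IsGalois.tfae (F := L) (E := M)).out 0 1).mp (inferInstance : IsGalois L M)
  -- K ≤ L'
  have hKL : K ≤ L' := by
    intro x hx
    have hx' : x ∈ IntermediateField.fixedField (⊤ : Subgroup (M ≃ₐ[L] M)) := by
      intro σ
      exact hx ⟨(σ : M ≃ₐ[L] M).restrictScalars F, Subgroup.mem_top _⟩
    rw [hLfix, IntermediateField.mem_bot] at hx'
    obtain ⟨y, hy⟩ := hx'
    exact ⟨y, hy⟩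
  -- finrank F L' = finrank F L, a prime
  have hrank : Module.finrank F L' = Module.finrank F L := by
    have e : L ≃ₐ[F] L' := AlgEquiv.ofInjectiveField (IsScalarTower.toAlgHom F L M)
    exact (e.toLinearEquiv.finrank_eq).symm
  -- finrank F K divides the prime
  have hdvd : Module.finrank F K ∣ Module.finrank F L := by
    rw [← hrank, ← IntermediateField.finrank_bot_mul_relfinrank hKL]
    exact dvd_mul_right _ _
  rcases (Nat.Prime.eq_one_or_self_of_dvd hprime _ hdvd) with h1 | hp
  · -- K = ⊥ would make M/F Galois
    exfalso
    exact hnotGalois (IsGalois.of_fixedField_eq_bot F M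
      (IntermediateField.finrank_eq_one_iff.mp h1))
  · have hKeq : K = L' := IntermediateField.eq_of_le_of_finrank_eq hKL (by rw [hp, hrank])
    refine ⟨?_, hKeq⟩
    intro σ x
    have hmem : algebraMap L M x ∈ K := hKeq ▸ ⟨x, rfl⟩
    exact hmem ⟨σ, Subgroup.mem_top σ⟩
end
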